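/- arXiv:1904.03967 — 3 statements merged into one kernel-verified Lean document; each statement's English description precedes it below -/
import Mathlib

section
/- Let X₁, X₂, …, X_q be Hausdorff topological spaces and e₁, e₂, …, e_q open cells in X₁, X₂, …, X_q of dimensions d₁, …, d_q respectively. Then e₁ × e₂ × ⋯ × e_q is an open cell of dimension d₁ + d₂ + ⋯ + d_q in the product space X₁ × X₂ × ⋯ × X_q, and its boundary is ∂(e₁ × ⋯ × e_q) = ⋃_{i=1}^q closure(e₁) × ⋯ × closure(e_{i−1}) × ∂e_i × closure(e_{i+1}) × ⋯ × closure(e_q). -/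
open scoped InnerProductSpace

noncomputable section

/-- `e` is an open cell in `X` with characteristic map `f : Dⁿ → X`:
`f` is continuous on the closed unit ball `Dⁿ`, and restricts to a homeomorphism
(i.e. a topological embedding) of the open unit ball onto `e`. -/
def IsCellMap {X : Type*} [TopologicalSpace X] {n : ℕ}
    (f : EuclideanSpace ℝ (Fin n) → X) (e : Set X) : Prop :=
  ContinuousOn f (Metric.closedBall 0 1) ∧
  Topology.IsEmbedding ((Metric.ball (0 : EuclideanSpace ℝ (Fin n)) 1).restrict f) ∧
  f '' Metric.ball 0 1 = e

/-- `e` is an open cell of dimension `n` in `X`. -/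
def IsOpenCell {X : Type*} [TopologicalSpace X] (e : Set X) (n : ℕ) : Prop :=
  ∃ f : EuclideanSpace ℝ (Fin n) → X, IsCellMap f e

theorem isEmbedding_piMap' {ι : Type*} {A Z : ι → Type*}
    [∀ i, TopologicalSpace (A i)] [∀ i, TopologicalSpace (Z i)]
    {f : ∀ i, A i → Z i} (hf : ∀ i, Topology.IsEmbedding (f i)) :
    Topology.IsEmbedding (Pi.map f) := by
  refine ⟨⟨?_⟩, Function.Injective.piMap fun i => (hf i).injective⟩
  simp only [Pi.topologicalSpace, induced_iInf, induced_compose]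
  refine iInf_congr fun i => ?_
  rw [show ((fun p => p i) ∘ Pi.map f : (∀ j, A j) → Z i) = f i ∘ (fun p => p i) from rfl,
    ← induced_compose, ← (hf i).eq_induced]

theorem isEmbedding_piSubtype {ι : Type*} {A : ι → Type*} [∀ i, TopologicalSpace (A i)]
    (s : ∀ i, Set (A i)) :
    Topology.IsEmbedding
      (fun (x : ↥(Set.univ.pi s)) (i : ι) => (⟨x.1 i, x.2 i (Set.mem_univ i)⟩ : ↥(s i))) := by
  have hcomp : (Pi.map fun i => (Subtype.val : s i → A i)) ∘
      (fun (x : ↥(Set.univ.pi s)) (i : ι) => (⟨x.1 i, x.2 i (Set.mem_univ i)⟩ : ↥(s i))) =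
      Subtype.val := rfl
  refine Topology.IsEmbedding.of_comp ?_ (Continuous.piMap fun i => continuous_subtype_val) ?_
  · exact continuous_pi fun i =>
      Continuous.subtype_mk ((continuous_apply i).comp continuous_subtype_val) _
  · rw [hcomp]; exact Topology.IsEmbedding.subtypeVal

/-- Lemma 2.8: a finite product of open cells `eᵢ` of dimensions `dᵢ` in Hausdorff spaces
`Xᵢ` is an open cell of dimension `Σᵢ dᵢ` in the product space, with boundary
`⋃ᵢ closure e₁ × ⋯ × ∂eᵢ × ⋯ × closure e_q`. -/
theorem isOpenCell_pi
    {q : ℕ} (X : Fin q → Type*) [∀ i, TopologicalSpace (X i)] [∀ i, T2Space (X i)]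
    (e : ∀ i, Set (X i)) (d : Fin q → ℕ) (he : ∀ i, IsOpenCell (e i) (d i)) :
    IsOpenCell (Set.univ.pi e) (∑ i, d i) ∧
    closure (Set.univ.pi e) \ Set.univ.pi e =
      ⋃ i : Fin q,
        Set.univ.pi (Function.update (fun j => closure (e j)) i (closure (e i) \ e i)) := by
  constructor
  · choose f hf using he
    have hrank : Module.finrank ℝ (EuclideanSpace ℝ (Fin (∑ i, d i))) =
        Module.finrank ℝ (∀ i, EuclideanSpace ℝ (Fin (d i))) := by
      simp [Module.finrank_pi_fintype, finrank_euclideanSpace_fin]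
    let L : EuclideanSpace ℝ (Fin (∑ i, d i)) ≃L[ℝ] (∀ i, EuclideanSpace ℝ (Fin (d i))) :=
      ContinuousLinearEquiv.ofFinrankEq hrank
    set s : Set (EuclideanSpace ℝ (Fin (∑ i, d i))) := ⇑L ⁻¹' Metric.closedBall 0 1 with hs
    have hconv : Convex ℝ s :=
      (convex_closedBall (0 : ∀ i, EuclideanSpace ℝ (Fin (d i))) 1).linear_preimage
        (L : EuclideanSpace ℝ (Fin (∑ i, d i)) →ₗ[ℝ] ∀ i, EuclideanSpace ℝ (Fin (d i)))
    have hsclosed : IsClosed s := Metric.isClosed_closedBall.preimage L.continuous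
    have hsb : Bornology.IsBounded s := by
      have himg : s = ⇑L.symm '' Metric.closedBall 0 1 := by
        ext x
        constructor
        · intro hx; exact ⟨L x, hx, L.symm_apply_apply x⟩
        · rintro ⟨y, hy, rfl⟩; simpa [hs, L.apply_symm_apply] using hy
      rw [himg]
      have hlip := (L.symm : (∀ i, EuclideanSpace ℝ (Fin (d i))) →L[ℝ]
        EuclideanSpace ℝ (Fin (∑ i, d i))).lipschitz
      exact hlip.isBounded_image (Metric.isBounded_closedBall
        (x := (0 : ∀ i, EuclideanSpace ℝ (Fin (d i)))) (r := 1))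
    have hintcb : interior (Metric.closedBall (0 : ∀ i, EuclideanSpace ℝ (Fin (d i))) 1) =
        Metric.ball 0 1 := by
      rcases subsingleton_or_nontrivial (∀ i, EuclideanSpace ℝ (Fin (d i))) with hP | hP
      · have h1 : Metric.closedBall (0 : ∀ i, EuclideanSpace ℝ (Fin (d i))) 1 = Set.univ := by
          ext x; simp [Subsingleton.elim x 0]
        have h2 : Metric.ball (0 : ∀ i, EuclideanSpace ℝ (Fin (d i))) 1 = Set.univ := by
          ext x; simp [Subsingleton.elim x 0]
        rw [h1, h2, interior_univ]
      · exact interior_closedBall' _ _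
    have hint : interior s = ⇑L ⁻¹' Metric.ball 0 1 := by
      have := L.toHomeomorph.preimage_interior
        (Metric.closedBall (0 : ∀ i, EuclideanSpace ℝ (Fin (d i))) 1)
      rw [hintcb] at this
      simpa [hs] using this.symm
    have hne : (interior s).Nonempty := by
      refine ⟨0, ?_⟩
      rw [hint]
      simp [Set.mem_preimage, map_zero]
    obtain ⟨h, h1, h2, -⟩ :=
      exists_homeomorph_image_interior_closure_frontier_eq_unitBall hconv hne hsb
    let Φ : EuclideanSpace ℝ (Fin (∑ i, d i)) ≃ₜ (∀ i, EuclideanSpace ℝ (Fin (d i))) :=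
      h.symm.trans L.toHomeomorph
    have hΦ : ⇑Φ = ⇑L ∘ ⇑h.symm := rfl
    have hsii : ∀ t : Set (EuclideanSpace ℝ (Fin (∑ i, d i))), ⇑h.symm '' (⇑h '' t) = t := by
      intro t
      rw [← Set.image_comp]
      simp
    have HΦc : ⇑Φ '' Metric.closedBall 0 1 = Metric.closedBall (0 : ∀ i,
        EuclideanSpace ℝ (Fin (d i))) 1 := by
      have hsymm : ⇑h.symm '' Metric.closedBall 0 1 = s := by
        rw [hsclosed.closure_eq] at h2
        rw [← h2, hsii]
      rw [hΦ, Set.image_comp, hsymm, hs]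
      exact Set.image_preimage_eq _ L.surjective
    have HΦb : ⇑Φ '' Metric.ball 0 1 = Metric.ball (0 : ∀ i,
        EuclideanSpace ℝ (Fin (d i))) 1 := by
      have hsymm : ⇑h.symm '' Metric.ball 0 1 = interior s := by
        rw [← h1, hsii]
      rw [hΦ, Set.image_comp, hsymm, hint]
      exact Set.image_preimage_eq _ L.surjective
    have hballP : Metric.ball (0 : ∀ i, EuclideanSpace ℝ (Fin (d i))) 1 =
        Set.univ.pi fun i => Metric.ball (0 : EuclideanSpace ℝ (Fin (d i))) 1 :=
      ball_pi _ one_pos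
    have hcballP : Metric.closedBall (0 : ∀ i, EuclideanSpace ℝ (Fin (d i))) 1 =
        Set.univ.pi fun i => Metric.closedBall (0 : EuclideanSpace ℝ (Fin (d i))) 1 :=
      closedBall_pi _ zero_le_one
    refine ⟨Pi.map f ∘ ⇑Φ, ?_, ?_, ?_⟩
    · have hFc : ContinuousOn (Pi.map f)
          (Metric.closedBall (0 : ∀ i, EuclideanSpace ℝ (Fin (d i))) 1) := by
        rw [hcballP]
        exact continuousOn_pi.2 fun i => ((hf i).1).comp
          (continuous_apply i).continuousOn fun p hp => hp i (Set.mem_univ i)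
      exact hFc.comp Φ.continuous.continuousOn
        (fun x hx => by rw [← HΦc]; exact Set.mem_image_of_mem _ hx)
    · have hmaps : Set.MapsTo ⇑Φ (Metric.ball (0 : EuclideanSpace ℝ (Fin (∑ i, d i))) 1)
          (Set.univ.pi fun i => Metric.ball (0 : EuclideanSpace ℝ (Fin (d i))) 1) := by
        intro x hx
        rw [← hballP, ← HΦb]
        exact Set.mem_image_of_mem _ hx
      have hrestr : Topology.IsEmbedding (hmaps.restrict _ _ _) :=
        Topology.IsEmbedding.codRestrict
          (Φ.isEmbedding.comp Topology.IsEmbedding.subtypeVal) _ _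
      have key : (Metric.ball (0 : EuclideanSpace ℝ (Fin (∑ i, d i))) 1).restrict
            (Pi.map f ∘ ⇑Φ) =
          (Pi.map fun i => (Metric.ball (0 : EuclideanSpace ℝ (Fin (d i))) 1).restrict (f i)) ∘
            ((fun (x : ↥(Set.univ.pi fun i =>
                Metric.ball (0 : EuclideanSpace ℝ (Fin (d i))) 1)) i =>
              (⟨x.1 i, x.2 i (Set.mem_univ i)⟩ :
                ↥(Metric.ball (0 : EuclideanSpace ℝ (Fin (d i))) 1))) ∘
              (hmaps.restrict _ _ _)) := rfl
      rw [key]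
      exact ((isEmbedding_piMap' fun i => (hf i).2.1).comp (isEmbedding_piSubtype _)).comp hrestr
    · rw [Set.image_comp, HΦb, hballP, Set.piMap_image_univ_pi]
      exact Set.pi_congr rfl fun i _ => (hf i).2.2
  · rw [closure_pi_set]
    ext x
    simp only [Set.mem_diff, Set.mem_univ_pi, Set.mem_iUnion]
    constructor
    · rintro ⟨h1, h2⟩
      push_neg at h2
      obtain ⟨i, hi⟩ := h2
      refine ⟨i, fun j => ?_⟩
      rcases eq_or_ne j i with rfl | hj
      · rw [Function.update_self]; exact ⟨h1 j, hi⟩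
      · rw [Function.update_of_ne hj]; exact h1 j
    · rintro ⟨i, hi⟩
      have hii := hi i
      rw [Function.update_self] at hii
      refine ⟨fun j => ?_, fun hmem => hii.2 (hmem i)⟩
      rcases eq_or_ne j i with rfl | hj
      · exact hii.1
      · have hj' := hi j
        rwa [Function.update_of_ne hj] at hj'


end
end

section
/- Let Z be a finite-dimensional completely flagged vector space over a field K, Y a subspace of Z (with the induced complete flag), and X a nonzero subspace of Y. Then (1) the Schubert functions satisfy ω_X^Z = ω_X^Y ∘ ω_Y^Z, and (2) the Schubert symbols satisfy σ_X^Z = σ_Y^Z ∘ σ_X^Y. -/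
noncomputable section

/-- The (1-based) Schubert symbol `σ_X(k) = min { i : dim (X ∩ F i) ≥ k }` of a
subspace `X` relative to a flag `F`. -/
def schubertSigma {K W : Type*} [Ring K] [AddCommGroup W] [Module K W]
    (X : Submodule K W) (F : ℕ → Submodule K W) (k : ℕ) : ℕ :=
  sInf {i : ℕ | k ≤ Module.finrank K ↥(X ⊓ F i)}

/-- The (1-based) Schubert function `ω_X(k) = dim (X ∩ F k)` of a subspace `X`
relative to a flag `F`. -/
def schubertOmega {K W : Type*} [Ring K] [AddCommGroup W] [Module K W]
    (X : Submodule K W) (F : ℕ → Submodule K W) (k : ℕ) : ℕ :=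
  Module.finrank K ↥(X ⊓ F k)

/-- `F` is a complete flag of a finite dimensional space `W`:
`F` is increasing with `dim (F i) = i` for `0 ≤ i ≤ dim W`
(and `F i = W` for `i ≥ dim W`). -/
def IsCompleteFlag (K : Type*) {W : Type*} [Ring K] [AddCommGroup W] [Module K W]
    (F : ℕ → Submodule K W) : Prop :=
  Monotone F ∧ ∀ i, Module.finrank K ↥(F i) = min i (Module.finrank K W)

/-- The complete flag induced on a subspace `Y` of a completely flagged space:
`Y_k = Y ∩ F (σ_Y(k))`. -/
def inducedFlag {K W : Type*} [Ring K] [AddCommGroup W] [Module K W]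
    (Y : Submodule K W) (F : ℕ → Submodule K W) : ℕ → Submodule K W :=
  fun k => Y ⊓ F (schubertSigma Y F k)

/-- Lemma 4.3: for a subspace `X ≠ 0` of a subspace `Y` of a finite dimensional
completely flagged space `Z` (with `Y` carrying the induced complete flag), the
Schubert functions satisfy `ω_X^Z = ω_X^Y ∘ ω_Y^Z` and the Schubert symbols satisfy
`σ_X^Z = σ_Y^Z ∘ σ_X^Y`. -/
theorem schubert_comp
    (K Z : Type*) [Field K] [AddCommGroup Z] [Module K Z] [FiniteDimensional K Z]
    (W : ℕ → Submodule K Z) (hW : IsCompleteFlag K W)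
    (Y X : Submodule K Z) (hXY : X ≤ Y) (hX : X ≠ ⊥) :
    (∀ k ≤ Module.finrank K Z,
        schubertOmega X W k = schubertOmega X (inducedFlag Y W) (schubertOmega Y W k)) ∧
    (∀ k, 1 ≤ k → k ≤ Module.finrank K ↥X →
        schubertSigma X W k = schubertSigma Y W (schubertSigma X (inducedFlag Y W) k)) := by
  classical
  obtain ⟨hmono, hdim⟩ := hW
  set n := Module.finrank K Z with hn
  have hXinfY : X ⊓ Y = X := inf_eq_left.mpr hXY
  have hXW : ∀ a : ℕ, X ⊓ (Y ⊓ W a) = X ⊓ W a := by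
    intro a; rw [← inf_assoc, hXinfY]
  have wmono : ∀ (V : Submodule K Z) {i j : ℕ}, i ≤ j →
      Module.finrank K ↥(V ⊓ W i) ≤ Module.finrank K ↥(V ⊓ W j) :=
    fun V i j h => Submodule.finrank_mono (inf_le_inf_left V (hmono h))
  have wtop : W n = ⊤ := by
    apply Submodule.eq_top_of_finrank_eq
    rw [hdim n]; simp [hn]
  have step : ∀ (V : Submodule K Z) (i : ℕ),
      Module.finrank K ↥(V ⊓ W (i+1)) ≤ Module.finrank K ↥(V ⊓ W i) + 1 := by
    intro V i
    have hle : W i ≤ W (i+1) := hmono (Nat.le_succ i)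
    have h1 : (V ⊓ W (i+1)) ⊓ W i = V ⊓ W i := by
      rw [inf_assoc, inf_eq_right.mpr hle]
    have h2 := Submodule.finrank_sup_add_finrank_inf_eq (V ⊓ W (i+1)) (W i)
    rw [h1] at h2
    have h3 : Module.finrank K ↥((V ⊓ W (i+1)) ⊔ W i) ≤ Module.finrank K ↥(W (i+1)) :=
      Submodule.finrank_mono (sup_le inf_le_right hle)
    have h4 : Module.finrank K ↥(W (i+1)) ≤ Module.finrank K ↥(W i) + 1 := by
      rw [hdim, hdim]; omega
    omega
  have keyeq : ∀ {i j : ℕ}, i ≤ j →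
      Module.finrank K ↥(Y ⊓ W j) ≤ Module.finrank K ↥(Y ⊓ W i) →
      X ⊓ W i = X ⊓ W j := by
    intro i j hij hd
    have hYij : Y ⊓ W i = Y ⊓ W j :=
      Submodule.eq_of_le_of_finrank_le (inf_le_inf_left Y (hmono hij)) hd
    rw [← hXW i, hYij, hXW j]
  constructor
  · -- Part 1
    intro k hk
    simp only [schubertOmega, inducedFlag, schubertSigma]
    set m := Module.finrank K ↥(Y ⊓ W k) with hm
    have hkmem : k ∈ {i : ℕ | m ≤ Module.finrank K ↥(Y ⊓ W i)} := le_refl m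
    have hne : {i : ℕ | m ≤ Module.finrank K ↥(Y ⊓ W i)}.Nonempty := ⟨k, hkmem⟩
    set j := sInf {i : ℕ | m ≤ Module.finrank K ↥(Y ⊓ W i)} with hj
    have hjk : j ≤ k := Nat.sInf_le hkmem
    have hjmem : m ≤ Module.finrank K ↥(Y ⊓ W j) := Nat.sInf_mem hne
    have hXjk : X ⊓ W j = X ⊓ W k := keyeq hjk hjmem
    exact congrArg (fun S : Submodule K Z => Module.finrank K ↥S) ((hXW j).trans hXjk).symm
  · -- Part 2
    intro k hk1 hkX
    simp only [schubertSigma, inducedFlag, schubertOmega]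
    set S := {i : ℕ | k ≤ Module.finrank K ↥(X ⊓ W i)} with hS
    have hnS : S.Nonempty := by
      refine ⟨n, ?_⟩
      show k ≤ Module.finrank K ↥(X ⊓ W n)
      rw [wtop, inf_top_eq]
      exact hkX
    set t := sInf S with ht
    have htmem : k ≤ Module.finrank K ↥(X ⊓ W t) := Nat.sInf_mem hnS
    have ht1 : 1 ≤ t := by
      by_contra h
      have ht0 : t = 0 := by omega
      have h0 : Module.finrank K ↥(X ⊓ W 0) ≤ Module.finrank K ↥(W 0) :=
        Submodule.finrank_mono inf_le_right
      rw [hdim 0] at h0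
      rw [ht0] at htmem
      omega
    have htp : Module.finrank K ↥(X ⊓ W (t-1)) < k := by
      have : t - 1 ∉ S := Nat.notMem_of_lt_sInf (by omega)
      simpa [hS, Set.mem_setOf_eq, not_le] using this
    have hjump : Module.finrank K ↥(Y ⊓ W (t-1)) < Module.finrank K ↥(Y ⊓ W t) := by
      by_contra h
      push_neg at h
      have := keyeq (Nat.sub_le t 1) h
      rw [this] at htp
      omega
    set m := Module.finrank K ↥(Y ⊓ W t) with hmdef
    have hstep : Module.finrank K ↥(Y ⊓ W t) ≤ Module.finrank K ↥(Y ⊓ W (t-1)) + 1 := by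
      have := step Y (t-1)
      rwa [Nat.sub_add_cancel ht1] at this
    have hm1 : Module.finrank K ↥(Y ⊓ W (t-1)) = m - 1 ∧ 1 ≤ m := by
      constructor <;> omega
    have hsigmaYm : sInf {i : ℕ | m ≤ Module.finrank K ↥(Y ⊓ W i)} = t := by
      have htin : t ∈ {i : ℕ | m ≤ Module.finrank K ↥(Y ⊓ W i)} := le_refl m
      have hle : sInf {i : ℕ | m ≤ Module.finrank K ↥(Y ⊓ W i)} ≤ t := Nat.sInf_le htin
      by_contra h
      have hlt : sInf {i : ℕ | m ≤ Module.finrank K ↥(Y ⊓ W i)} < t := by omega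
      have hmem : m ≤ Module.finrank K
          ↥(Y ⊓ W (sInf {i : ℕ | m ≤ Module.finrank K ↥(Y ⊓ W i)})) :=
        Nat.sInf_mem ⟨t, htin⟩
      have : Module.finrank K ↥(Y ⊓ W (sInf {i : ℕ | m ≤ Module.finrank K ↥(Y ⊓ W i)}))
          ≤ Module.finrank K ↥(Y ⊓ W (t-1)) := wmono Y (by omega)
      omega
    have hT : sInf {j : ℕ | k ≤ Module.finrank K
        ↥(X ⊓ (Y ⊓ W (sInf {i : ℕ | j ≤ Module.finrank K ↥(Y ⊓ W i)})))} = m := by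
      set T := {j : ℕ | k ≤ Module.finrank K
        ↥(X ⊓ (Y ⊓ W (sInf {i : ℕ | j ≤ Module.finrank K ↥(Y ⊓ W i)})))} with hTdef
      have hmT : m ∈ T := by
        show k ≤ Module.finrank K
          ↥(X ⊓ (Y ⊓ W (sInf {i : ℕ | m ≤ Module.finrank K ↥(Y ⊓ W i)})))
        rw [hsigmaYm, hXW]
        exact htmem
      have hle : sInf T ≤ m := Nat.sInf_le hmT
      by_contra h
      have hlt : sInf T < m := by omega
      set j := sInf T with hjd
      have hjT : j ∈ T := Nat.sInf_mem ⟨m, hmT⟩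
      have hsj : sInf {i : ℕ | j ≤ Module.finrank K ↥(Y ⊓ W i)} ≤ t - 1 := by
        apply Nat.sInf_le
        simp only [Set.mem_setOf_eq]
        omega
      have hd : Module.finrank K ↥(X ⊓ W (sInf {i : ℕ | j ≤ Module.finrank K ↥(Y ⊓ W i)}))
          ≤ Module.finrank K ↥(X ⊓ W (t-1)) := wmono X hsj
      have hjT' : k ≤ Module.finrank K
          ↥(X ⊓ (Y ⊓ W (sInf {i : ℕ | j ≤ Module.finrank K ↥(Y ⊓ W i)}))) := hjT
      rw [hXW] at hjT'
      omega
    exact ((congrArg (fun m' => sInf {i : ℕ | m' ≤ Module.finrank K ↥(Y ⊓ W i)}) hT).trans hsigmaYm).symm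

end
end

section
/- Let n₁ < n₂ < ⋯ < n_q < n_{q+1} be positive integers and for each 1 ≤ i ≤ q let σ_i : {1,…,n_i} → {1,…,n_{i+1}} be a strictly increasing function. Then Σ_{i=1}^q d(σ_i) = Σ_{k=1}^{n₁} (σ_q⋯σ₂σ₁(k) − k) + Σ_{k ∉ Im σ₁} (σ_q⋯σ₃σ₂(k) − k) + ⋯ + Σ_{k ∉ Im σ_{q−2}} (σ_qσ_{q−1}(k) − k) + Σ_{k ∉ Im σ_{q−1}} (σ_q(k) − k), where in the i-th sum k ranges over the elements of {1,…,n_i} not in the image of σ_{i−1}, and d(σ) = Σ_k (σ(k) − k). -/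
noncomputable section

/-- `compSeq σ i j = σ (i+j) ∘ ⋯ ∘ σ (i+1) ∘ σ i`, the composition of a chain of
functions; in particular `compSeq σ i (q - i) = σ q ∘ ⋯ ∘ σ i` when `i ≤ q`. -/
def compSeq (σ : ℕ → ℕ → ℕ) (i : ℕ) : ℕ → ℕ → ℕ
  | 0 => σ i
  | (j + 1) => σ (i + j + 1) ∘ compSeq σ i j

lemma compSeq_succ_left (σ : ℕ → ℕ → ℕ) (i : ℕ) :
    ∀ j, compSeq σ i (j + 1) = compSeq σ (i + 1) j ∘ σ i
  | 0 => rfl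
  | (j + 1) => by
    show σ (i + (j + 1) + 1) ∘ compSeq σ i (j + 1) = compSeq σ (i + 1) (j + 1) ∘ σ i
    rw [compSeq_succ_left σ i j]
    show σ (i + (j + 1) + 1) ∘ (compSeq σ (i + 1) j ∘ σ i) =
      (σ (i + 1 + j + 1) ∘ compSeq σ (i + 1) j) ∘ σ i
    rw [show i + (j + 1) + 1 = i + 1 + j + 1 by omega]
    rfl

lemma aux_decomp (q : ℕ) (hq : 1 ≤ q) :
    ∀ (a : ℕ) (n : ℕ → ℕ) (σ : ℕ → ℕ → ℕ),
    (∀ i ∈ Finset.Icc (a + 1) (a + q), StrictMonoOn (σ i) (Set.Icc 1 (n i))) →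
    (∀ i ∈ Finset.Icc (a + 1) (a + q),
        Set.MapsTo (σ i) (Set.Icc 1 (n i)) (Set.Icc 1 (n (i + 1)))) →
    ∑ i ∈ Finset.Icc (a + 1) (a + q), ∑ k ∈ Finset.Icc 1 (n i), ((σ i k : ℤ) - (k : ℤ)) =
      ∑ i ∈ Finset.Icc (a + 1) (a + q),
        ∑ k ∈ (if i = a + 1 then Finset.Icc 1 (n (a + 1))
            else Finset.Icc 1 (n i) \ (Finset.Icc 1 (n (i - 1))).image (σ (i - 1))),
          ((compSeq σ i (a + q - i) k : ℤ) - (k : ℤ)) := by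
  induction q, hq using Nat.le_induction with
  | base =>
    intro a n σ hmono hmaps
    simp [Nat.sub_self, compSeq]
  | succ q hq IH =>
    intro a n σ hmono hmaps
    have hsplit : Finset.Icc (a + 1) (a + (q + 1)) =
        insert (a + 1) (Finset.Icc (a + 2) (a + 1 + q)) := by
      ext x; simp; omega
    have hnotmem : a + 1 ∉ Finset.Icc (a + 2) (a + 1 + q) := by simp
    -- restricted hypotheses for the induction hypothesis
    have hsub : Finset.Icc (a + 2) (a + 1 + q) ⊆ Finset.Icc (a + 1) (a + (q + 1)) := by
      intro x hx; simp at hx ⊢; omega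
    have IH' := IH (a + 1) n σ
      (fun i hi => hmono i (hsub hi)) (fun i hi => hmaps i (hsub hi))
    rw [hsplit, Finset.sum_insert hnotmem, Finset.sum_insert hnotmem, IH']
    -- peel off i = a + 2 from both remaining sums
    have hsplit2 : Finset.Icc (a + 1 + 1) (a + 1 + q) =
        insert (a + 2) (Finset.Icc (a + 3) (a + 1 + q)) := by
      ext x; simp; omega
    have hnotmem2 : a + 2 ∉ Finset.Icc (a + 3) (a + 1 + q) := by simp
    have hsplit2' : Finset.Icc (a + 2) (a + 1 + q) =
        insert (a + 2) (Finset.Icc (a + 3) (a + 1 + q)) := hsplit2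
    rw [hsplit2', Finset.sum_insert hnotmem2, Finset.sum_insert hnotmem2]
    -- the tails agree termwise
    have htail : ∑ i ∈ Finset.Icc (a + 3) (a + 1 + q),
        ∑ k ∈ (if i = a + 1 + 1 then Finset.Icc 1 (n (a + 1 + 1))
            else Finset.Icc 1 (n i) \ (Finset.Icc 1 (n (i - 1))).image (σ (i - 1))),
          ((compSeq σ i (a + 1 + q - i) k : ℤ) - (k : ℤ)) =
        ∑ i ∈ Finset.Icc (a + 3) (a + 1 + q),
        ∑ k ∈ (if i = a + 1 then Finset.Icc 1 (n (a + 1))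
            else Finset.Icc 1 (n i) \ (Finset.Icc 1 (n (i - 1))).image (σ (i - 1))),
          ((compSeq σ i (a + (q + 1) - i) k : ℤ) - (k : ℤ)) := by
      apply Finset.sum_congr rfl
      intro i hi
      simp only [Finset.mem_Icc] at hi
      rw [if_neg (by omega), if_neg (by omega),
        show a + 1 + q - i = a + (q + 1) - i by omega]
    rw [htail]
    -- core identity at the first two indices
    have h1 : a + 1 ∈ Finset.Icc (a + 1) (a + (q + 1)) := by simp
    have hexp2 : a + 1 + q - (a + 1 + 1) = q - 1 := by omega
    have hexp2' : a + (q + 1) - (a + 2) = q - 1 := by omega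
    set G : ℕ → ℕ := compSeq σ (a + 2) (q - 1) with hG
    have hcomp : compSeq σ (a + 1) (a + (q + 1) - (a + 1)) = G ∘ σ (a + 1) := by
      rw [show a + (q + 1) - (a + 1) = (q - 1) + 1 by omega]
      exact compSeq_succ_left σ (a + 1) (q - 1)
    simp only [show a + 1 + 1 = a + 2 from rfl, show (a + 2 = a + 2) = True from by simp,
      show (a + 1 = a + 1) = True from by simp,
      show (a + 2 = a + 1) = False from by simp, if_true, if_false,
      hexp2, hexp2', hcomp, show a + 2 - 1 = a + 1 by omega, Function.comp_apply]
    -- now pure computation with s = Icc 1 (n (a+1)), t = Icc 1 (n (a+2))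
    set s := Finset.Icc 1 (n (a + 1)) with hs
    set t := Finset.Icc 1 (n (a + 2)) with ht
    have hinj : ∀ x ∈ s, ∀ y ∈ s, σ (a + 1) x = σ (a + 1) y → x = y := by
      intro x hx y hy hxy
      have := (hmono (a + 1) h1).injOn
      simp only [hs, Finset.mem_Icc] at hx hy
      exact this (Set.mem_Icc.2 hx) (Set.mem_Icc.2 hy) hxy
    have himg : s.image (σ (a + 1)) ⊆ t := by
      intro x hx
      simp only [Finset.mem_image] at hx
      obtain ⟨y, hy, rfl⟩ := hx
      simp only [hs, Finset.mem_Icc] at hy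
      have := hmaps (a + 1) h1 (Set.mem_Icc.2 hy)
      simp only [ht, Finset.mem_Icc]
      exact Set.mem_Icc.1 this
    have hsdiff : ∑ k ∈ t \ s.image (σ (a + 1)), ((G k : ℤ) - (k : ℤ)) +
        ∑ k ∈ s.image (σ (a + 1)), ((G k : ℤ) - (k : ℤ)) =
        ∑ k ∈ t, ((G k : ℤ) - (k : ℤ)) := Finset.sum_sdiff himg
    have himgsum : ∑ k ∈ s.image (σ (a + 1)), ((G k : ℤ) - (k : ℤ)) =
        ∑ k ∈ s, ((G (σ (a + 1) k) : ℤ) - (σ (a + 1) k : ℤ)) := Finset.sum_image hinj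
    have hT : ∑ k ∈ s, ((G (σ (a + 1) k) : ℤ) - (k : ℤ)) =
        ∑ k ∈ s, ((σ (a + 1) k : ℤ) - (k : ℤ)) +
        ∑ k ∈ s, ((G (σ (a + 1) k) : ℤ) - (σ (a + 1) k : ℤ)) := by
      rw [← Finset.sum_add_distrib]
      apply Finset.sum_congr rfl
      intro k _
      ring
    linarith [hsdiff, himgsum, hT]

/-- Lemma 5.1: for strictly increasing `σᵢ : {1,…,nᵢ} → {1,…,n_{i+1}}` (`1 ≤ i ≤ q`),
`Σ_{i=1}^q d(σᵢ) = Σ_{k=1}^{n₁} (σ_q⋯σ₁(k) − k) + Σ_{i=2}^{q} Σ_{k ∈ {1,…,nᵢ} ∖ Im σ_{i−1}}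
(σ_q⋯σᵢ(k) − k)`, where `d(σ) = Σ_k (σ(k) − k)`. -/
theorem dSigma_sum_decomposition
    (q : ℕ) (hq : 1 ≤ q) (n : ℕ → ℕ) (σ : ℕ → ℕ → ℕ)
    (hn1 : 1 ≤ n 1)
    (hn : ∀ i ∈ Finset.Icc 1 q, n i < n (i + 1))
    (hσmono : ∀ i ∈ Finset.Icc 1 q, StrictMonoOn (σ i) (Set.Icc 1 (n i)))
    (hσmaps : ∀ i ∈ Finset.Icc 1 q, Set.MapsTo (σ i) (Set.Icc 1 (n i)) (Set.Icc 1 (n (i + 1)))) :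
    ∑ i ∈ Finset.Icc 1 q, ∑ k ∈ Finset.Icc 1 (n i), ((σ i k : ℤ) - (k : ℤ)) =
      ∑ i ∈ Finset.Icc 1 q,
        ∑ k ∈ (if i = 1 then Finset.Icc 1 (n 1)
            else Finset.Icc 1 (n i) \ (Finset.Icc 1 (n (i - 1))).image (σ (i - 1))),
          ((compSeq σ i (q - i) k : ℤ) - (k : ℤ)) := by
  have := aux_decomp q hq 0 n σ (by simpa using hσmono) (by simpa using hσmaps)
  simpa using this

end
end
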